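/- Let H_{n;c}(x) = H_n(x) + c·H_{n−1}(x) with H_m the Hermite polynomial. For c ≠ 0: disc(H_{n;c}) = 2^{n(3n−5)/2} · ∏_{k=1}^{n−1} k^k · (−c)^n · H_{n;c}(−(c² + 2n)/(2c)). -/

import Mathlib

open Polynomial

/-- The resultant: `Res f g = lc(f)^(deg g) * ∏_{α root of f} g(α)`. -/
noncomputable def Res (f g : Polynomial ℂ) : ℂ :=
  f.leadingCoeff ^ g.natDegree * (f.roots.map (fun a => g.eval a)).prod

/-- The discriminant of a polynomial. -/
noncomputable def disc (f : Polynomial ℂ) : ℂ :=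
  (-1) ^ (f.natDegree * (f.natDegree - 1) / 2) / f.leadingCoeff * Res f (derivative f)

/-- The physicists' Hermite polynomials. -/
noncomputable def H : ℕ → Polynomial ℂ
  | 0 => 1
  | 1 => 2 * X
  | (n + 2) => 2 * X * H (n + 1) - C (2 * (n + 1 : ℂ)) * H n

lemma H_zero : H 0 = 1 := rfl
lemma H_one : H 1 = 2 * X := rfl
lemma H_add_two (k : ℕ) : H (k + 2) = 2 * X * H (k + 1) - C (2 * (k + 1 : ℂ)) * H k := rfl

lemma two_C : (2 : ℂ[X]) = C 2 := (map_ofNat C 2).symm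

lemma H_deg_lead : ∀ n : ℕ, (H n).natDegree = n ∧ (H n).leadingCoeff = 2 ^ n := by
  intro n
  induction n using Nat.strong_induction_on with
  | _ n ih =>
    match n with
    | 0 => simp [H_zero]
    | 1 =>
      rw [H_one, two_C]
      refine ⟨?_, ?_⟩
      · rw [natDegree_C_mul (by norm_num : (2:ℂ) ≠ 0), natDegree_X]
      · rw [leadingCoeff_mul]; simp
    | (k + 2) =>
      obtain ⟨hd1, hl1⟩ := ih (k+1) (by omega)
      obtain ⟨hd0, hl0⟩ := ih k (by omega)
      have h1 : H (k+1) ≠ 0 := leadingCoeff_ne_zero.mp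
        (by rw [hl1]; exact pow_ne_zero _ two_ne_zero)
      have h0 : H k ≠ 0 := leadingCoeff_ne_zero.mp
        (by rw [hl0]; exact pow_ne_zero _ two_ne_zero)
      have h2X : (2 * X : ℂ[X]) ≠ 0 := by
        rw [two_C]; exact mul_ne_zero (by simp) X_ne_zero
      have hkey1 : (2 * X * H (k+1)).natDegree = k + 2 := by
        rw [two_C, mul_assoc, natDegree_C_mul (by norm_num : (2:ℂ) ≠ 0),
          natDegree_X_mul h1, hd1]
      have hkey2 : (2 * X * H (k+1)).leadingCoeff = 2 ^ (k+2) := by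
        rw [leadingCoeff_mul, hl1, two_C, leadingCoeff_mul]
        simp [pow_succ]; ring
      have hne : 2 * X * H (k+1) ≠ 0 := mul_ne_zero h2X h1
      have hlt : (C (2 * (k + 1 : ℂ)) * H k).degree < (2 * X * H (k+1)).degree := by
        refine lt_of_le_of_lt (degree_mul_le _ _) ?_
        refine lt_of_le_of_lt (add_le_add degree_C_le le_rfl) ?_
        rw [zero_add, degree_eq_natDegree h0, hd0, degree_eq_natDegree hne, hkey1]
        exact_mod_cast by omega
      rw [H_add_two]
      refine ⟨?_, ?_⟩
      · rw [← hkey1]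
        exact natDegree_eq_of_degree_eq (degree_sub_eq_left_of_degree_lt hlt)
      · rw [leadingCoeff_sub_of_degree_lt hlt, hkey2]

lemma H_natDegree (n : ℕ) : (H n).natDegree = n := (H_deg_lead n).1
lemma H_leadingCoeff (n : ℕ) : (H n).leadingCoeff = 2 ^ n := (H_deg_lead n).2
lemma H_ne_zero (n : ℕ) : H n ≠ 0 :=
  leadingCoeff_ne_zero.mp (by rw [H_leadingCoeff]; exact pow_ne_zero _ two_ne_zero)

lemma H_deriv : ∀ k : ℕ, derivative (H (k + 1)) = C (2 * (k + 1 : ℂ)) * H k := by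
  intro k
  induction k using Nat.strong_induction_on with
  | _ k ih =>
    match k with
    | 0 => rw [H_one, H_zero]; simp [two_C]
    | 1 =>
      rw [H_add_two 0, H_one, H_zero]
      simp [two_C]
      ring
    | (m + 2) =>
      have i1 : derivative (H (m+1+1)) = C (2 * ((m+1 : ℕ) + 1 : ℂ)) * H (m+1) :=
        ih (m+1) (by omega)
      have i0 : derivative (H (m+1)) = C (2 * ((m : ℕ) + 1 : ℂ)) * H m :=
        ih m (by omega)
      have e : H (m+2+1) = 2 * X * H (m+1+1) - C (2 * ((m+1 : ℕ) + 1 : ℂ)) * H (m+1) :=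
        H_add_two (m+1)
      have e2 : H (m+1+1) = 2 * X * H (m+1) - C (2 * ((m : ℕ) + 1 : ℂ)) * H m :=
        H_add_two m
      rw [e, derivative_sub, derivative_mul, derivative_mul, derivative_mul,
        derivative_C, zero_mul, i1, i0, e2]
      simp only [derivative_X, derivative_ofNat, derivative_C, zero_mul, zero_add, mul_one]
      simp only [map_mul, map_add, map_one, map_ofNat]
      push_cast
      simp only [map_add, map_one, map_ofNat, map_natCast]
      ring

lemma card_roots_eq (p : ℂ[X]) : Multiset.card p.roots = p.natDegree :=
  splits_iff_card_roots.mp (IsAlgClosed.splits p)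

lemma eval_eq (p : ℂ[X]) (v : ℂ) :
    eval v p = p.leadingCoeff * (p.roots.map fun a => v - a).prod :=
  (IsAlgClosed.splits p).eval_eq_prod_roots v

lemma neg_prod (s : Multiset ℂ) (f : ℂ → ℂ) :
    (s.map (fun a => -(f a))).prod = (-1) ^ (Multiset.card s) * (s.map f).prod := by
  rw [show (fun a => -(f a)) = (Neg.neg ∘ f) from rfl, ← Multiset.map_map,
    Multiset.prod_map_neg, Multiset.card_map]

lemma prod_const_mul (s : Multiset ℂ) (k : ℂ) (f : ℂ → ℂ) :
    (s.map (fun a => k * f a)).prod = k ^ (Multiset.card s) * (s.map f).prod := by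
  rw [Multiset.prod_map_mul (f := fun _ => k) (g := f), Multiset.map_const',
    Multiset.prod_replicate]

lemma prod_eval_swap (p q : ℂ[X]) :
    p.leadingCoeff ^ q.natDegree * (p.roots.map (fun a => eval a q)).prod =
      (-1) ^ (p.natDegree * q.natDegree) *
        (q.leadingCoeff ^ p.natDegree * (q.roots.map (fun b => eval b p)).prod) := by
  have cA := card_roots_eq p
  have cB := card_roots_eq q
  have h1 : (p.roots.map (fun a => eval a q)).prod
      = q.leadingCoeff ^ p.natDegree *
        (p.roots.map (fun a => (q.roots.map fun b => a - b).prod)).prod := by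
    rw [Multiset.map_congr rfl (fun a _ => eval_eq q a), prod_const_mul, cA]
  have h2 : (q.roots.map (fun b => eval b p)).prod
      = p.leadingCoeff ^ q.natDegree *
        (q.roots.map (fun b => (p.roots.map fun a => b - a).prod)).prod := by
    rw [Multiset.map_congr rfl (fun b _ => eval_eq p b), prod_const_mul, cB]
  have h3 : (p.roots.map (fun a => (q.roots.map fun b => a - b).prod)).prod
      = (-1) ^ (p.natDegree * q.natDegree) *
        (q.roots.map (fun b => (p.roots.map fun a => b - a).prod)).prod := by
    rw [Multiset.prod_map_prod_map]
    have : ∀ b ∈ q.roots, (p.roots.map fun a => a - b).prod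
        = (-1) ^ p.natDegree * (p.roots.map fun a => b - a).prod := by
      intro b _
      rw [← cA, ← neg_prod]
      congr 1
      exact Multiset.map_congr rfl (fun a _ => by ring)
    rw [Multiset.map_congr rfl this, prod_const_mul, cB, ← pow_mul]
  rw [h1, h2, h3]
  ring

lemma prod_H_roots : ∀ m : ℕ, ((H (m+1)).roots.map (fun a => eval a (H m))).prod
    = ∏ k ∈ Finset.Icc 1 m, (-(2*(k:ℂ))) ^ k := by
  intro m
  induction m with
  | zero =>
    have h1 : (H 1).roots = {0} := by
      show (2 * X : ℂ[X]).roots = {0}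
      rw [show (2 * X : ℂ[X]) = C 2 * X from by rw [← map_ofNat C 2],
        roots_C_mul _ (by norm_num), roots_X]
    simp [h1, H]
  | succ m ih =>
    show ((H (m+2)).roots.map (fun a => eval a (H (m+1)))).prod = _
    have hswap := prod_eval_swap (H (m+2)) (H (m+1))
    rw [H_natDegree, H_natDegree, H_leadingCoeff, H_leadingCoeff,
      Even.neg_one_pow (by rw [mul_comm]; exact Nat.even_mul_succ_self (m+1)), one_mul,
      ← pow_mul, ← pow_mul, mul_comm (m+2) (m+1)] at hswap
    have hP := mul_left_cancel₀ (pow_ne_zero _ (two_ne_zero (α := ℂ))) hswap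
    rw [hP]
    have hev : ∀ b ∈ (H (m+1)).roots, eval b (H (m+2)) = (-(2*((m:ℂ)+1))) * eval b (H m) := by
      intro b hb
      have hroot : eval b (H (m+1)) = 0 := isRoot_of_mem_roots hb
      rw [H_add_two m]
      simp [hroot]
    rw [Multiset.map_congr rfl hev, prod_const_mul, card_roots_eq, H_natDegree, ih,
      Finset.prod_Icc_succ_top (Nat.succ_le_succ (Nat.zero_le m))]
    push_cast
    ring

lemma deg_lead_aux (a b : ℂ) (ha : a ≠ 0) (i j : ℕ) (hij : i < j) :
    (C a * H j + C b * H i).natDegree = j ∧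
      (C a * H j + C b * H i).leadingCoeff = a * 2 ^ j := by
  have hCa : C a * H j ≠ 0 := mul_ne_zero (by simpa using ha) (H_ne_zero j)
  have hlt : (C b * H i).degree < (C a * H j).degree := by
    refine lt_of_le_of_lt (degree_mul_le _ _) ?_
    refine lt_of_le_of_lt (add_le_add degree_C_le le_rfl) ?_
    rw [zero_add, degree_eq_natDegree (H_ne_zero i), H_natDegree,
      degree_eq_natDegree hCa, natDegree_C_mul ha, H_natDegree]
    exact_mod_cast hij
  constructor
  · rw [natDegree_eq_of_degree_eq (degree_add_eq_left_of_degree_lt hlt),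
      natDegree_C_mul ha, H_natDegree]
  · rw [leadingCoeff_add_of_degree_lt' hlt, leadingCoeff_mul, leadingCoeff_C,
      H_leadingCoeff]

lemma sum_Icc_gauss : ∀ t : ℕ, (∑ k ∈ Finset.Icc 1 t, k) * 2 = t * (t + 1) := by
  intro t
  induction t with
  | zero => simp
  | succ t ih =>
    rw [Finset.sum_Icc_succ_top (by omega)]
    calc ((∑ k ∈ Finset.Icc 1 t, k) + (t+1)) * 2
        = (∑ k ∈ Finset.Icc 1 t, k) * 2 + (t+1) * 2 := by ring
      _ = t * (t+1) + (t+1) * 2 := by rw [ih]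
      _ = (t+1) * (t+1+1) := by ring

theorem stmt_12 (n : ℕ) (hn : 2 ≤ n) (c : ℂ) (hc : c ≠ 0) :
    disc (H n + C c * H (n - 1)) =
      2 ^ (n * (3 * n - 5) / 2) * (∏ k ∈ Finset.Icc 1 (n - 1), (k : ℂ) ^ k) *
        (-c) ^ n *
        (H n + C c * H (n - 1)).eval (-(c ^ 2 + 2 * n) / (2 * c)) := by
  obtain ⟨m, rfl⟩ : ∃ m, n = m + 2 := ⟨n - 2, by omega⟩
  simp only [show m + 2 - 1 = m + 1 from rfl]
  set S := ∑ k ∈ Finset.Icc 1 (m+1), k with hSdef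
  have hS2 : S * 2 = (m+1) * (m+2) := sum_Icc_gauss (m+1)
  set f : ℂ[X] := H (m+2) + C c * H (m+1) with hfdef
  set x₀ : ℂ := -(c ^ 2 + 2 * ((m+2 : ℕ) : ℂ)) / (2 * c) with hx₀def
  -- degree and leading coefficient of f
  have hfaux := deg_lead_aux 1 c one_ne_zero (m+1) (m+2) (by omega)
  rw [map_one, one_mul, one_mul] at hfaux
  have hfd : f.natDegree = m + 2 := hfaux.1
  have hflc : f.leadingCoeff = 2 ^ (m+2) := hfaux.2
  have hcard : Multiset.card f.roots = m + 2 := by rw [card_roots_eq, hfd]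
  -- derivative of f
  have hderiv : derivative f = C (2 * ((m:ℂ) + 2)) * H (m+1) + C (c * (2 * ((m:ℂ) + 1))) * H m := by
    have d2 : derivative (H (m+2)) = C (2 * ((m+1 : ℕ) + 1 : ℂ)) * H (m+1) := H_deriv (m+1)
    have d1 : derivative (H (m+1)) = C (2 * ((m : ℕ) + 1 : ℂ)) * H m := H_deriv m
    rw [hfdef, derivative_add, derivative_mul, derivative_C, zero_mul, zero_add, d2, d1]
    push_cast
    simp only [map_mul, map_add, map_one, map_ofNat, map_natCast]
    ring
  have hderivdeg : (derivative f).natDegree = m + 1 := by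
    rw [hderiv]
    refine (deg_lead_aux _ _ ?_ m (m+1) (by omega)).1
    have : ((m:ℂ) + 2) ≠ 0 := by
      have : ((m+2 : ℕ) : ℂ) ≠ 0 := Nat.cast_ne_zero.mpr (by omega)
      push_cast at this
      exact this
    exact mul_ne_zero two_ne_zero this
  -- key identity for the derivative
  have hkey : derivative f = (C (2*c) * X + C (c^2 + 2*((m:ℂ)+2))) * H (m+1) - C c * f := by
    rw [hderiv, hfdef, H_add_two m]
    simp only [map_mul, map_add, map_one, map_ofNat, map_natCast, map_pow]
    push_cast
    ring
  -- evaluation of the derivative at roots of f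
  have hev : ∀ a ∈ f.roots, eval a (derivative f) = (2*c) * ((a - x₀) * eval a (H (m+1))) := by
    intro a ha
    have h0 : eval a f = 0 := isRoot_of_mem_roots ha
    rw [hkey]
    simp only [eval_sub, eval_mul, eval_add, eval_C, eval_X, h0, mul_zero, sub_zero]
    have hlin : (2*c) * (a - x₀) = 2*c*a + (c^2 + 2*((m:ℂ)+2)) := by
      rw [hx₀def]
      push_cast
      field_simp
      ring
    rw [show (2*c)*((a - x₀) * eval a (H (m+1)))
        = ((2*c)*(a - x₀)) * eval a (H (m+1)) from by ring, hlin]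
  have hprod1 : (f.roots.map (fun a => eval a (derivative f))).prod
      = (2*c)^(m+2) * ((f.roots.map (fun a => a - x₀)).prod *
          (f.roots.map (fun a => eval a (H (m+1)))).prod) := by
    rw [Multiset.map_congr rfl hev, prod_const_mul, hcard, ← Multiset.prod_map_mul]
  have hE : eval x₀ f = 2^(m+2) * ((-1)^(m+2) * (f.roots.map (fun a => a - x₀)).prod) := by
    rw [eval_eq f x₀, hflc]
    congr 1
    rw [Multiset.map_congr rfl (fun a (_ : a ∈ f.roots) => show x₀ - a = -(a - x₀) by ring),
      neg_prod, hcard]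
  have hswap2 : (f.roots.map (fun a => eval a (H (m+1)))).prod
      = ((H (m+1)).roots.map (fun b => eval b f)).prod := by
    have hs := prod_eval_swap f (H (m+1))
    rw [hfd, hflc, H_natDegree, H_leadingCoeff,
      Even.neg_one_pow (by rw [mul_comm]; exact Nat.even_mul_succ_self (m+1)), one_mul,
      ← pow_mul, ← pow_mul, mul_comm (m+2) (m+1)] at hs
    exact mul_left_cancel₀ (pow_ne_zero _ (two_ne_zero (α := ℂ))) hs
  have hevb : ∀ b ∈ (H (m+1)).roots, eval b f = (-(2*((m:ℂ)+1))) * eval b (H m) := by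
    intro b hb
    have hr : eval b (H (m+1)) = 0 := isRoot_of_mem_roots hb
    rw [hfdef, H_add_two m]
    simp [hr]
  have hprodH : ((H (m+1)).roots.map (fun b => eval b f)).prod
      = ∏ k ∈ Finset.Icc 1 (m+1), (-(2*(k:ℂ)))^k := by
    rw [Multiset.map_congr rfl hevb, prod_const_mul, card_roots_eq, H_natDegree,
      prod_H_roots m, Finset.prod_Icc_succ_top (Nat.succ_le_succ (Nat.zero_le m))]
    push_cast
    ring
  have hBsplit : (∏ k ∈ Finset.Icc 1 (m+1), (-(2*(k:ℂ)))^k)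
      = (-1)^S * 2^S * (∏ k ∈ Finset.Icc 1 (m+1), (k:ℂ)^k) := by
    rw [hSdef, ← Finset.prod_pow_eq_pow_sum, ← Finset.prod_pow_eq_pow_sum,
      ← Finset.prod_mul_distrib, ← Finset.prod_mul_distrib]
    refine Finset.prod_congr rfl (fun k _ => ?_)
    rw [show (-(2*(k:ℂ))) = (-1) * 2 * (k:ℂ) from by ring, mul_pow, mul_pow]
  -- natural number exponent computations
  have hSdisc : (m+2) * ((m+2) - 1) / 2 = S := by
    rw [show (m+2) - 1 = m + 1 from rfl, mul_comm, ← hS2, Nat.mul_div_cancel _ two_pos]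
  have hRexp : (m+2) * (3*(m+2) - 5) / 2 = (m+2)*m + S := by
    have h : (m+2) * (3*(m+2) - 5) = ((m+2)*m + S) * 2 := by
      rw [show 3*(m+2) - 5 = 3*m+1 from by omega]
      calc (m+2) * (3*m+1) = ((m+2)*m)*2 + (m+1)*(m+2) := by ring
        _ = ((m+2)*m)*2 + S*2 := by rw [hS2]
        _ = ((m+2)*m + S) * 2 := by ring
    rw [h, Nat.mul_div_cancel _ two_pos]
  -- assemble
  unfold disc Res
  rw [hfd, hflc, hderivdeg, hprod1, hswap2, hprodH, hBsplit, hSdisc, hRexp, hE]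
  set A := (f.roots.map (fun a => a - x₀)).prod with hA
  set P := ∏ k ∈ Finset.Icc 1 (m+1), (k:ℂ)^k with hPd
  have h1 : ((-1:ℂ))^S * (-1)^S = 1 := by
    rw [← pow_add]; exact Even.neg_one_pow ⟨S, rfl⟩
  have h2 : ((2:ℂ)^(m+2))^(m+1) = 2^((m+2)*(m+1)) := by rw [← pow_mul]
  have h3 : ((2:ℂ))^((m+2)*(m+1)) * 2^S = 2^((m+2)*m+S) * 2^(m+2) := by
    rw [← pow_add, ← pow_add]; congr 1; ring
  field_simp
  rw [h2]
  calc ((-1:ℂ) ^ S) ^ 2 * 2 ^ ((m + 2) * (m + 1)) * (2 * c) ^ (m + 2) * A * 2 ^ S * P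
      = (-1:ℂ)^S * (2^((m+2)*(m+1)) * ((2*c)^(m+2) * (A * ((-1)^S * 2^S * P)))) := by ring
    _ = ((-1:ℂ)^S * (-1)^S) * (2^((m+2)*(m+1)) * 2^S) * ((2*c)^(m+2) * A * P) := by ring
    _ = (2^((m+2)*m+S) * 2^(m+2)) * ((2*c)^(m+2) * A * P) := by rw [h1, h3]; ring
    _ = _ := by
        have h6 : ((-1:ℂ))^(m*2) = 1 := by rw [mul_comm, pow_mul]; norm_num
        linear_combination (-(c^(m+2) * 2^((m+2)*m+S) * 2^(m+2) * 2^(m+2) * A * P)) * h6
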